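/- For any connected graph G with n ≥ 3 vertices and m edges, the total outer-connected domination number of the middle graph M(G) satisfies 2·|Leaf(G)| ≤ γ_tc(M(G)) ≤ n + m − 1, where Leaf(G) is the set of vertices of degree 1 in G. -/

import Mathlib

open SimpleGraph

/-- The middle graph `M(G)`: vertices are `V(G) ⊕ E(G)`; an edge-vertex is adjacent to
another edge-vertex iff the edges are distinct and share an endpoint, and a vertex is
adjacent to an edge iff it is incident to it. -/
def middleGraph {V : Type*} (G : SimpleGraph V) : SimpleGraph (V ⊕ G.edgeSet) where
  Adj x y :=
    match x, y with
    | Sum.inl _, Sum.inl _ => False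
    | Sum.inl v, Sum.inr e => v ∈ (e : Sym2 V)
    | Sum.inr e, Sum.inl v => v ∈ (e : Sym2 V)
    | Sum.inr e, Sum.inr f => e ≠ f ∧ ∃ v, v ∈ (e : Sym2 V) ∧ v ∈ (f : Sym2 V)
  symm := by
    refine ⟨?_⟩
    rintro (v|e) (w|f) h
    · exact h
    · exact h
    · exact h
    · exact ⟨h.1.symm, h.2.imp fun v hv => ⟨hv.2, hv.1⟩⟩
  loopless := by
    refine ⟨?_⟩
    rintro (v|e) h
    · exact h
    · exact h.1 rfl

/-- `D` is a total dominating set of `G`: every vertex has a neighbour in `D`. -/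
def IsTotalDomSet {V : Type*} (G : SimpleGraph V) (D : Set V) : Prop :=
  ∀ v : V, ∃ u ∈ D, G.Adj v u

/-- `D` is a total outer-connected dominating set of `G`: it is total dominating and
the subgraph induced on the complement of `D` is connected. -/
def IsTOCDomSet {V : Type*} (G : SimpleGraph V) (D : Set V) : Prop :=
  IsTotalDomSet G D ∧ (G.induce Dᶜ).Connected

/-- The total domination number `γₜ(G)`. -/
noncomputable def totalDomNum {V : Type*} (G : SimpleGraph V) : ℕ :=
  sInf {k | ∃ D : Set V, IsTotalDomSet G D ∧ D.ncard = k}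

/-- The total outer-connected domination number `γ_tc(G)`. -/
noncomputable def tocDomNum {V : Type*} (G : SimpleGraph V) : ℕ :=
  sInf {k | ∃ D : Set V, IsTOCDomSet G D ∧ D.ncard = k}

/-- The set of leaves (vertices of degree 1) of `G`. -/
def leafSet {V : Type*} (G : SimpleGraph V) : Set V :=
  {v | ∃ u, G.neighborSet v = {u}}

/-- The wheel graph with hub `none` and rim cycle on `Fin n`. -/
def wheelGraph (n : ℕ) : SimpleGraph (Option (Fin n)) where
  Adj x y :=
    match x, y with
    | none, none => False
    | none, some _ => True
    | some _, none => True
    | some i, some j => (SimpleGraph.cycleGraph n).Adj i j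
  symm := by
    refine ⟨?_⟩
    rintro (_|i) (_|j) h
    · exact h
    · exact h
    · exact h
    · exact (SimpleGraph.cycleGraph n).adj_symm h
  loopless := by
    refine ⟨?_⟩
    rintro (_|i) h
    · exact h
    · exact (SimpleGraph.cycleGraph n).loopless.irrefl i h

/-- The corona `G ∘ K₁`: to each vertex `a` of `G` (copy `Sum.inl a`) a pendant
vertex `Sum.inr a` is attached. -/
def corona {V : Type*} (G : SimpleGraph V) : SimpleGraph (V ⊕ V) where
  Adj x y :=
    match x, y with
    | Sum.inl a, Sum.inl b => G.Adj a b
    | Sum.inl a, Sum.inr b => a = b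
    | Sum.inr a, Sum.inl b => a = b
    | Sum.inr _, Sum.inr _ => False
  symm := by
    refine ⟨?_⟩
    rintro (a|a) (b|b) h
    · exact G.adj_symm h
    · exact h.symm
    · exact h.symm
    · exact h
  loopless := by
    refine ⟨?_⟩
    rintro (a|a) h
    · exact G.loopless.irrefl a h
    · exact h

/-- The 2-corona `G ∘ P₂`: to each vertex `a` of `G` (copy `Sum.inl a`) a path
`Sum.inl a — Sum.inr (Sum.inl a) — Sum.inr (Sum.inr a)` of length 2 is attached. -/
def corona2 {V : Type*} (G : SimpleGraph V) : SimpleGraph (V ⊕ V ⊕ V) where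
  Adj x y :=
    match x, y with
    | Sum.inl a, Sum.inl b => G.Adj a b
    | Sum.inl a, Sum.inr (Sum.inl b) => a = b
    | Sum.inr (Sum.inl a), Sum.inl b => a = b
    | Sum.inr (Sum.inl a), Sum.inr (Sum.inr b) => a = b
    | Sum.inr (Sum.inr a), Sum.inr (Sum.inl b) => a = b
    | _, _ => False
  symm := by
    refine ⟨?_⟩
    rintro (a|a|a) (b|b|b) h <;> first | exact G.adj_symm h | exact h.symm | exact h
  loopless := by
    refine ⟨?_⟩
    rintro (a|a|a) h
    · exact G.loopless.irrefl a h
    · exact h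
    · exact h

/-- The spider `S_{1,n,n}`: hub `none`, middle vertices `some (.inl i)`,
leaves `some (.inr i)`; the star `K_{1,n}` with every edge subdivided once. -/
def spiderGraph (n : ℕ) : SimpleGraph (Option (Fin n ⊕ Fin n)) where
  Adj x y :=
    match x, y with
    | none, some (Sum.inl _) => True
    | some (Sum.inl _), none => True
    | some (Sum.inl i), some (Sum.inr j) => i = j
    | some (Sum.inr i), some (Sum.inl j) => i = j
    | _, _ => False
  symm := by
    refine ⟨?_⟩
    rintro (_|i|i) (_|j|j) h <;> first | exact h.symm | exact h
  loopless := by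
    refine ⟨?_⟩
    rintro (_|i|i) h <;> exact h

/-- The friendship graph `Fₙ`: `n` triangles sharing the common vertex `none`. -/
def friendshipGraph (n : ℕ) : SimpleGraph (Option (Fin n × Fin 2)) where
  Adj x y :=
    match x, y with
    | none, some _ => True
    | some _, none => True
    | some (i, a), some (j, b) => i = j ∧ a ≠ b
    | none, none => False
  symm := by
    refine ⟨?_⟩
    rintro (_|⟨i,a⟩) (_|⟨j,b⟩) h <;> first | exact ⟨h.1.symm, h.2.symm⟩ | exact h
  loopless := by
    refine ⟨?_⟩
    rintro (_|⟨i,a⟩) h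
    · exact h
    · exact h.2 rfl


set_option linter.unusedSectionVars false

section AuxLemmas

variable {V : Type*} [Fintype V] {G : SimpleGraph V}

lemma aux_exists_ne_ne (hn : 3 ≤ Fintype.card V) (v w : V) :
    ∃ x : V, x ≠ v ∧ x ≠ w := by
  classical
  by_contra h
  push_neg at h
  have hsub : (Finset.univ : Finset V) ⊆ {v, w} := by
    intro x _
    by_cases hx : x = v
    · simp [hx]
    · simp [h x hx]
  have := Finset.card_le_card hsub
  have h2 : ({v, w} : Finset V).card ≤ 2 := Finset.card_insert_le _ _ |>.trans (by simp)
  rw [Finset.card_univ] at this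
  omega

lemma aux_walk_closed {v w : V} (hv : G.neighborSet v = {w}) (hw : G.neighborSet w = {v}) :
    ∀ {a b : V}, G.Walk a b → (a = v ∨ a = w) → (b = v ∨ b = w) := by
  intro a b p
  induction p with
  | nil => exact id
  | @cons a c b h p ih =>
    intro ha
    apply ih
    rcases ha with rfl | rfl
    · have hc : c ∈ G.neighborSet a := h
      rw [hv] at hc
      exact Or.inr hc
    · have hc : c ∈ G.neighborSet a := h
      rw [hw] at hc
      exact Or.inl hc

lemma aux_no_leaf_pair (hG : G.Connected) (hn : 3 ≤ Fintype.card V) {v w : V}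
    (hv : G.neighborSet v = {w}) (hw : G.neighborSet w = {v}) : False := by
  obtain ⟨x, hxv, hxw⟩ := aux_exists_ne_ne hn v w
  obtain ⟨p⟩ := hG.preconnected v x
  rcases aux_walk_closed hv hw p (Or.inl rfl) with h | h
  · exact hxv h
  · exact hxw h

lemma aux_exists_adj (hG : G.Connected) (hn : 3 ≤ Fintype.card V) (u : V) :
    ∃ w, G.Adj u w := by
  obtain ⟨x, hxu, -⟩ := aux_exists_ne_ne hn u u
  obtain ⟨p⟩ := hG.preconnected u x
  cases p with
  | nil => exact absurd rfl hxu.symm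
  | cons h _ => exact ⟨_, h⟩

/-- The complement of a vertex-singleton in `V ⊕ E` is a TOC dominating set of `M(G)`. -/
lemma aux_upper (hG : G.Connected) (hn : 3 ≤ Fintype.card V) (v : V) :
    IsTOCDomSet (middleGraph G) ({Sum.inl v}ᶜ : Set (V ⊕ G.edgeSet)) := by
  constructor
  · rintro (u | e)
    · obtain ⟨w, hw⟩ := aux_exists_adj hG hn u
      refine ⟨Sum.inr ⟨s(u, w), hw⟩, by simp, ?_⟩
      show u ∈ s(u, w)
      exact Sym2.mem_mk_left u w
    · obtain ⟨e, he⟩ := e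
      induction e using Sym2.ind with
      | _ a b =>
        have hab : a ≠ b := (G.mem_edgeSet.mp he).ne
        by_cases ha : a = v
        · refine ⟨Sum.inl b, by simpa using fun h => hab (ha.trans h.symm), ?_⟩
          show b ∈ s(a, b)
          exact Sym2.mem_mk_right a b
        · refine ⟨Sum.inl a, by simp [ha], ?_⟩
          show a ∈ s(a, b)
          exact Sym2.mem_mk_left a b
  · rw [compl_compl]
    haveI : Nonempty ({Sum.inl v} : Set (V ⊕ G.edgeSet)) := ⟨⟨Sum.inl v, rfl⟩⟩
    constructor
    intro a b
    have : a = b := Subtype.ext (a.2.trans b.2.symm)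
    exact this ▸ Reachable.refl a

lemma aux_card_compl_singleton (x : V ⊕ G.edgeSet) :
    ({x}ᶜ : Set (V ⊕ G.edgeSet)).ncard = Fintype.card V + G.edgeSet.ncard - 1 := by
  classical
  rw [Set.compl_eq_univ_diff, Set.ncard_diff_singleton_of_mem (Set.mem_univ x),
    Set.ncard_univ, Nat.card_sum]
  rw [Nat.card_eq_fintype_card, Nat.card_coe_set_eq]

end AuxLemmas


section AuxLemmas2

variable {V : Type*} [Fintype V] {G : SimpleGraph V}

open Classical in
/-- A choice of neighbour for each vertex (meaningful for leaves). -/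
noncomputable def leafNbr (G : SimpleGraph V) (v : V) : V :=
  if h : ∃ u, G.neighborSet v = {u} then h.choose else v

lemma leafNbr_spec {v : V} (hv : v ∈ leafSet G) : G.neighborSet v = {leafNbr G v} := by
  have hv' : ∃ u, G.neighborSet v = {u} := hv
  rw [leafNbr, dif_pos hv']
  exact hv'.choose_spec

lemma leafNbr_adj {v : V} (hv : v ∈ leafSet G) : G.Adj v (leafNbr G v) := by
  have : leafNbr G v ∈ G.neighborSet v := by rw [leafNbr_spec hv]; rfl
  exact this

/-- The leaf-edge of `v` as an element of `Sym2 V`. -/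
noncomputable def leafF (G : SimpleGraph V) (v : V) : Sym2 V := s(v, leafNbr G v)

lemma leafF_mem {v : V} (hv : v ∈ leafSet G) : leafF G v ∈ G.edgeSet :=
  G.mem_edgeSet.mpr (leafNbr_adj hv)

lemma leafF_injOn (hG : G.Connected) (hn : 3 ≤ Fintype.card V) :
    Set.InjOn (leafF G) (leafSet G) := by
  intro v hv w hw h
  rw [leafF, leafF, Sym2.eq_iff] at h
  rcases h with ⟨rfl, -⟩ | ⟨h1, h2⟩
  · rfl
  · exfalso
    refine aux_no_leaf_pair hG hn (v := v) (w := w) ?_ ?_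
    · rw [leafNbr_spec hv, h2]
    · rw [leafNbr_spec hw, ← h1]

open Classical in
/-- The leaf-edge of `v` as a vertex of the middle graph. -/
noncomputable def leafE (G : SimpleGraph V) (v : V) : V ⊕ G.edgeSet :=
  if h : leafF G v ∈ G.edgeSet then Sum.inr ⟨leafF G v, h⟩ else Sum.inl v

lemma leafE_eq {v : V} (hv : v ∈ leafSet G) :
    leafE G v = Sum.inr ⟨leafF G v, leafF_mem hv⟩ := by
  rw [leafE, dif_pos (leafF_mem hv)]

/-- A leaf's only neighbour in the middle graph is its leaf edge. -/
lemma leaf_unique_nbr {v : V} (hv : v ∈ leafSet G) {x : V ⊕ G.edgeSet}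
    (h : (middleGraph G).Adj (Sum.inl v) x) : x = leafE G v := by
  rw [leafE_eq hv]
  match x with
  | Sum.inl w => exact absurd h id
  | Sum.inr ⟨e, he⟩ =>
    have hme : v ∈ e := h
    obtain ⟨b, rfl⟩ := Sym2.mem_iff_exists.mp hme
    have hb : b ∈ G.neighborSet v := G.mem_edgeSet.mp he
    rw [leafNbr_spec hv] at hb
    have : s(v, b) = leafF G v := by rw [leafF, hb]
    simp only [Sum.inr.injEq, Subtype.mk_eq_mk]
    exact this

lemma leafE_injOn (hG : G.Connected) (hn : 3 ≤ Fintype.card V) :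
    Set.InjOn (leafE G) (leafSet G) := by
  intro v hv w hw h
  rw [leafE_eq hv, leafE_eq hw] at h
  simp only [Sum.inr.injEq, Subtype.mk_eq_mk] at h
  exact leafF_injOn hG hn hv hw h

lemma leafE_mem_of_TOC {D : Set (V ⊕ G.edgeSet)} (hD : IsTotalDomSet (middleGraph G) D)
    {v : V} (hv : v ∈ leafSet G) : leafE G v ∈ D := by
  obtain ⟨u, huD, hadj⟩ := hD (Sum.inl v)
  rwa [← leaf_unique_nbr hv hadj]

lemma leafSet_ncard_le (hG : G.Connected) (hn : 3 ≤ Fintype.card V) :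
    (leafSet G).ncard ≤ G.edgeSet.ncard := by
  calc (leafSet G).ncard = (leafF G '' leafSet G).ncard :=
        (Set.ncard_image_of_injOn (leafF_injOn hG hn)).symm
    _ ≤ G.edgeSet.ncard := by
        apply Set.ncard_le_ncard _ (Set.toFinite _)
        rintro x ⟨v, hv, rfl⟩
        exact leafF_mem hv

lemma leafSet_ncard_lt (hG : G.Connected) (hn : 3 ≤ Fintype.card V) :
    (leafSet G).ncard < Fintype.card V := by
  have : ∃ w : V, w ∉ leafSet G := by
    by_contra hw
    push_neg at hw
    have h0 : 0 < Fintype.card V := by omega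
    obtain ⟨v⟩ := Fintype.card_pos_iff.mp h0
    have hv := hw v
    set u := leafNbr G v with hu
    have hadj : G.Adj v u := leafNbr_adj hv
    have huL := hw u
    have hvu : v ∈ G.neighborSet u := hadj.symm
    rw [leafNbr_spec huL] at hvu
    refine aux_no_leaf_pair hG hn (v := v) (w := u) (leafNbr_spec hv) ?_
    rw [leafNbr_spec huL, ← hvu]
  obtain ⟨w, hw⟩ := this
  have hss : leafSet G ⊂ Set.univ := ⟨Set.subset_univ _, fun h => hw (h (Set.mem_univ w))⟩
  have := Set.ncard_lt_ncard hss (Set.toFinite _)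
  rwa [Set.ncard_univ, Nat.card_eq_fintype_card] at this

lemma aux_lower (hG : G.Connected) (hn : 3 ≤ Fintype.card V)
    {D : Set (V ⊕ G.edgeSet)} (hD : IsTOCDomSet (middleGraph G) D) :
    2 * (leafSet G).ncard ≤ D.ncard := by
  classical
  by_cases hall : ∀ v ∈ leafSet G, Sum.inl v ∈ D
  · -- all leaves and their edges are in D
    have h1 : (Sum.inl '' leafSet G : Set (V ⊕ G.edgeSet)) ⊆ D := by
      rintro x ⟨v, hv, rfl⟩; exact hall v hv
    have h2 : leafE G '' leafSet G ⊆ D := by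
      rintro x ⟨v, hv, rfl⟩; exact leafE_mem_of_TOC hD.1 hv
    have hdisj : Disjoint (Sum.inl '' leafSet G : Set (V ⊕ G.edgeSet))
        (leafE G '' leafSet G) := by
      rw [Set.disjoint_left]
      rintro x ⟨v, hv, rfl⟩ ⟨w, hw, hx⟩
      rw [leafE_eq hw] at hx
      exact Sum.inl_ne_inr hx.symm
    have hcard : ((Sum.inl '' leafSet G : Set (V ⊕ G.edgeSet)) ∪ leafE G '' leafSet G).ncard
        = 2 * (leafSet G).ncard := by
      rw [Set.ncard_union_eq hdisj (Set.toFinite _) (Set.toFinite _),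
        Set.ncard_image_of_injective _ Sum.inl_injective,
        Set.ncard_image_of_injOn (leafE_injOn hG hn)]
      ring
    rw [← hcard]
    exact Set.ncard_le_ncard (Set.union_subset h1 h2) (Set.toFinite _)
  · push_neg at hall
    obtain ⟨v₀, hv₀, hnin⟩ := hall
    have hcompl : Dᶜ = {Sum.inl v₀} := by
      apply Set.eq_of_subset_of_subset
      · intro x hx
        by_contra hxne
        obtain ⟨p⟩ := hD.2.preconnected ⟨Sum.inl v₀, hnin⟩ ⟨x, hx⟩
        cases p with
        | nil => exact hxne rfl
        | @cons _ c _ h p =>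
          have hadj : (middleGraph G).Adj (Sum.inl v₀) c.val := h
          have := leaf_unique_nbr hv₀ hadj
          have hcD : c.val ∈ Dᶜ := c.2
          rw [this] at hcD
          exact hcD (leafE_mem_of_TOC hD.1 hv₀)
      · intro x hx
        rw [hx]
        exact hnin
    have hDeq : D = ({Sum.inl v₀}ᶜ : Set (V ⊕ G.edgeSet)) := by
      rw [← compl_compl D, hcompl]
    rw [hDeq, aux_card_compl_singleton]
    have h1 := leafSet_ncard_le hG hn
    have h2 := leafSet_ncard_lt hG hn
    omega

end AuxLemmas2

theorem stmt0 {V : Type*} [Fintype V] (G : SimpleGraph V) (hG : G.Connected)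
    (hn : 3 ≤ Fintype.card V) :
    2 * (leafSet G).ncard ≤ tocDomNum (middleGraph G) ∧
      tocDomNum (middleGraph G) ≤ Fintype.card V + G.edgeSet.ncard - 1 := by
  classical
  have h0 : 0 < Fintype.card V := by omega
  obtain ⟨v⟩ := Fintype.card_pos_iff.mp h0
  have hmem : Fintype.card V + G.edgeSet.ncard - 1 ∈
      {k | ∃ D : Set (V ⊕ G.edgeSet), IsTOCDomSet (middleGraph G) D ∧ D.ncard = k} :=
    ⟨_, aux_upper hG hn v, aux_card_compl_singleton (Sum.inl v)⟩
  constructor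
  · refine le_csInf ⟨_, hmem⟩ ?_
    rintro k ⟨D, hD, rfl⟩
    exact aux_lower hG hn hD
  · exact Nat.sInf_le hmem
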